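/- Suppose that the (dk,Δ)-bipartite graph H has been constructed by the 2-step method from the connected (d,Δ)-bipartite graph H0 and the [Δ,k]-transversal design T. If H0 has line-diameter λ ≥ 4 then H has line-diameter λ. -/

import Mathlib

/-- The bipartite graph on `ν ⊕ β` (nodes on the left, blocks on the right)
determined by the adjacency relation `adj`. -/
def bipGraph {ν β : Type} (adj : ν → β → Prop) : SimpleGraph (ν ⊕ β) :=
  SimpleGraph.fromRel fun u v => ∃ x b, u = Sum.inl x ∧ v = Sum.inr b ∧ adj x b

/-- A `[Δ,k]`-transversal design: the nodes form a set of size `Δ * k` partitioned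
into `Δ` groups (the fibres of `group`), each of size `k`; there are `k ^ 2` blocks;
every block is adjacent to exactly one node of each group; and every pair of nodes
lying in distinct groups is adjacent to exactly one common block (the block
*generated* by the pair). -/
structure IsTransversalDesign {ν β : Type} (Δ k : ℕ)
    (group : ν → Fin Δ) (adj : ν → β → Prop) : Prop where
  two_le_k : 2 ≤ k
  two_le_Δ : 2 ≤ Δ
  groupCard : ∀ i : Fin Δ, Nat.card {x : ν // group x = i} = k
  blockCard : Nat.card β = k ^ 2
  blockMeets : ∀ (b : β) (i : Fin Δ), ∃! x : ν, group x = i ∧ adj x b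
  pairGen : ∀ x y : ν, group x ≠ group y → ∃! b : β, adj x b ∧ adj y b

/-- A family of walks (with sources `s i` and destinations `t i`) is pairwise
internally-disjoint if every vertex which is a source or destination of some member
of the family appears on members of the family only as their source or destination,
and every vertex which is not a source or destination of any member of the family
lies on at most one member of the family. -/
def PairwiseInternallyDisjoint {V ι : Type} {G : SimpleGraph V} {s t : ι → V}
    (p : (i : ι) → G.Walk (s i) (t i)) : Prop :=
  (∀ i j : ι, ∀ v : V, v ∈ (p i).support → (v = s j ∨ v = t j) → v = s i ∨ v = t i) ∧
  (∀ i j : ι, ∀ v : V, (∀ l : ι, v ≠ s l ∧ v ≠ t l) →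
    v ∈ (p i).support → v ∈ (p j).support → i = j)

/-- A family of walks is pairwise edge-disjoint if every edge lies on at most one
member of the family. -/
def PairwiseEdgeDisjoint {V ι : Type} {G : SimpleGraph V} {s t : ι → V}
    (p : (i : ι) → G.Walk (s i) (t i)) : Prop :=
  ∀ i j : ι, ∀ e : Sym2 V, e ∈ (p i).edges → e ∈ (p j).edges → i = j

/-- A `(d,Δ)`-bipartite graph: every node has degree `d` and every block has
degree (rank) `Δ`. -/
def IsBipartiteDegRank {ν β : Type} (d Δ : ℕ) (adj : ν → β → Prop) : Prop :=
  (∀ x : ν, Nat.card {b : β // adj x b} = d) ∧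
  (∀ b : β, Nat.card {x : ν // adj x b} = Δ)

/-- The bipartite graph determined by `adj` has line-diameter `l`: the maximum,
over pairs of distinct blocks, of the distance between the two blocks is `l`. -/
def HasLineDiam {ν β : Type} (adj : ν → β → Prop) (l : ℕ) : Prop :=
  (∀ b b' : β, b ≠ b' → (bipGraph adj).dist (Sum.inr b) (Sum.inr b') ≤ l) ∧
  (∃ b b' : β, b ≠ b' ∧ (bipGraph adj).dist (Sum.inr b) (Sum.inr b') = l)

/-- `adjH` describes the bipartite graph `H` built by the 2-step method from the
bipartite graph `H0` (given by `adj0`) and the `[Δ,k]`-transversal design `T`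
(given by `groupT`, `adjT`): the nodes of `H` are the pairs `(p, j)` for `p` a node
of `H0` and `j : Fin k` (so the group `G_p` is `{p} × Fin k`), the blocks of `H`
are the pairs `(Q, b)` for `Q` a block of `H0` and `b` a block of `T` (so the set
`B_Q` is `{Q} × βT`, and such sets are automatically pairwise disjoint, as are the
edge sets of the copies `T_Q`), a node `(p, j)` is adjacent in `H` to a block
`(Q, b)` only if `p` is adjacent to `Q` in `H0`, and for every block `Q` of `H0`
the nodes of the groups `G_p`, for `p` a neighbour of `Q` in `H0`, together with
the blocks of `B_Q` form a copy `T_Q` of `T` whose `Δ` groups are these groups. -/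
structure TwoStep {ν0 β0 νT βT : Type} (Δ k : ℕ)
    (adj0 : ν0 → β0 → Prop) (groupT : νT → Fin Δ) (adjT : νT → βT → Prop)
    (adjH : ν0 × Fin k → β0 × βT → Prop) : Prop where
  td : IsTransversalDesign Δ k groupT adjT
  supp : ∀ (x : ν0 × Fin k) (Q : β0) (b : βT), adjH x (Q, b) → adj0 x.1 Q
  copy : ∀ Q : β0, ∃ (enum : Fin Δ → ν0) (f : νT ≃ {x : ν0 × Fin k // adj0 x.1 Q})
      (g : βT ≃ βT),
    Function.Injective enum ∧ (∀ i : Fin Δ, adj0 (enum i) Q) ∧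
    (∀ q : ν0, adj0 q Q → ∃ i : Fin Δ, enum i = q) ∧
    (∀ x : νT, ((f x : ν0 × Fin k).1 = enum (groupT x))) ∧
    (∀ (x : νT) (b : βT), adjT x b ↔ adjH (f x : ν0 × Fin k) (Q, g b))

section
variable {ν β : Type} {adj : ν → β → Prop}

lemma bip_adj_inl_inr {x : ν} {b : β} :
    (bipGraph adj).Adj (Sum.inl x) (Sum.inr b) ↔ adj x b := by
  simp [bipGraph, SimpleGraph.fromRel_adj]

lemma bip_adj_inr {b : β} {y} (h : (bipGraph adj).Adj (Sum.inr b) y) :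
    ∃ x, y = Sum.inl x ∧ adj x b := by
  rw [bipGraph, SimpleGraph.fromRel_adj] at h
  obtain ⟨-, h | h⟩ := h <;> obtain ⟨x, c, h1, h2, h3⟩ := h
  · exact absurd h1 (by simp)
  · cases h2; exact ⟨x, h1, h3⟩

lemma bip_adj_inl {x : ν} {y} (h : (bipGraph adj).Adj (Sum.inl x) y) :
    ∃ b, y = Sum.inr b ∧ adj x b := by
  rw [bipGraph, SimpleGraph.fromRel_adj] at h
  obtain ⟨-, h | h⟩ := h <;> obtain ⟨z, c, h1, h2, h3⟩ := h
  · cases h1; exact ⟨c, h2, h3⟩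
  · exact absurd h2 (by simp)
end

section
variable {ν0 β0 νT βT : Type} {Δ k : ℕ}
  {adj0 : ν0 → β0 → Prop} {groupT : νT → Fin Δ} {adjT : νT → βT → Prop}
  {adjH : ν0 × Fin k → β0 × βT → Prop}
  (h2 : TwoStep Δ k adj0 groupT adjT adjH)
include h2

/-- every block of `H0` has a neighbour -/
lemma TS.exists_adj0 (Q : β0) : ∃ p, adj0 p Q := by
  obtain ⟨enum, f, g, hinj, hadjQ, hsurj, hf1, hadj⟩ := h2.copy Q
  exact ⟨enum ⟨0, by have := h2.td.two_le_Δ; omega⟩, hadjQ _⟩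

/-- H1: node on a block of H, of given group -/
lemma TS.node_on_block (Q : β0) (b : βT) (p : ν0) (hp : adj0 p Q) :
    ∃ j, adjH (p, j) (Q, b) := by
  obtain ⟨enum, f, g, hinj, hadjQ, hsurj, hf1, hadj⟩ := h2.copy Q
  obtain ⟨i, hi⟩ := hsurj p hp
  obtain ⟨x, ⟨hgx, hax⟩, -⟩ := h2.td.blockMeets (g.symm b) i
  have h := (hadj x (g.symm b)).mp hax
  rw [g.apply_symm_apply] at h
  have h1 : ((f x : ν0 × Fin k)).1 = p := by rw [hf1, hgx, hi]
  refine ⟨(f x : ν0 × Fin k).2, ?_⟩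
  rwa [← h1, Prod.mk.eta]

/-- H4: node on a block of H, outside a given group -/
lemma TS.node_on_block_ne (Q : β0) (b : βT) (p : ν0) :
    ∃ q j, q ≠ p ∧ adj0 q Q ∧ adjH (q, j) (Q, b) := by
  obtain ⟨enum, f, g, hinj, hadjQ, hsurj, hf1, hadj⟩ := h2.copy Q
  have hΔ := h2.td.two_le_Δ
  have hne : enum ⟨0, by omega⟩ ≠ enum ⟨1, by omega⟩ := by
    intro h; have := hinj h; simp [Fin.ext_iff] at this
  obtain ⟨i, hi⟩ : ∃ i : Fin Δ, enum i ≠ p := by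
    by_cases h : enum ⟨0, by omega⟩ = p
    · exact ⟨⟨1, by omega⟩, by rw [← h]; exact hne.symm⟩
    · exact ⟨⟨0, by omega⟩, h⟩
  obtain ⟨x, ⟨hgx, hax⟩, -⟩ := h2.td.blockMeets (g.symm b) i
  have h := (hadj x (g.symm b)).mp hax
  rw [g.apply_symm_apply] at h
  have h1 : ((f x : ν0 × Fin k)).1 = enum i := by rw [hf1, hgx]
  refine ⟨enum i, (f x : ν0 × Fin k).2, hi, hadjQ i, ?_⟩
  rwa [← h1, Prod.mk.eta]

/-- H2: block of H through a given node -/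
lemma TS.block_thru_node (Q : β0) (p : ν0) (j : Fin k) (hp : adj0 p Q) :
    ∃ c, adjH (p, j) (Q, c) := by
  obtain ⟨enum, f, g, hinj, hadjQ, hsurj, hf1, hadj⟩ := h2.copy Q
  set x := f.symm ⟨(p, j), hp⟩ with hx
  obtain ⟨i', hi'⟩ := Fintype.exists_ne_of_one_lt_card
    (by simpa using by have := h2.td.two_le_Δ; omega : 1 < Fintype.card (Fin Δ)) (groupT x)
  have : Nonempty {y : νT // groupT y = i'} := by
    have hk := h2.td.groupCard i'
    have : Nat.card {y : νT // groupT y = i'} ≠ 0 := by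
      rw [hk]; have := h2.td.two_le_k; omega
    exact (Nat.card_ne_zero.mp this).1
  obtain ⟨⟨y, hy⟩⟩ := this
  obtain ⟨c, ⟨hcx, hcy⟩, -⟩ := h2.td.pairGen x y (by rw [hy]; exact fun h => hi' h.symm)
  have h := (hadj x c).mp hcx
  rw [hx, Equiv.apply_symm_apply] at h
  exact ⟨g c, h⟩

/-- H3: block of H generated by two nodes of distinct groups -/
lemma TS.gen_block (Q : β0) (p p' : ν0) (j j' : Fin k)
    (hp : adj0 p Q) (hp' : adj0 p' Q) (hne : p ≠ p') :
    ∃ c, adjH (p, j) (Q, c) ∧ adjH (p', j') (Q, c) := by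
  obtain ⟨enum, f, g, hinj, hadjQ, hsurj, hf1, hadj⟩ := h2.copy Q
  set x := f.symm ⟨(p, j), hp⟩ with hx
  set x' := f.symm ⟨(p', j'), hp'⟩ with hx'
  have hfx : (f x : ν0 × Fin k) = (p, j) := by rw [hx, Equiv.apply_symm_apply]
  have hfx' : (f x' : ν0 × Fin k) = (p', j') := by rw [hx', Equiv.apply_symm_apply]
  have hgx : enum (groupT x) = p := by rw [← hf1, hfx]
  have hgx' : enum (groupT x') = p' := by rw [← hf1, hfx']
  have hgne : groupT x ≠ groupT x' := by
    intro h; apply hne; rw [← hgx, ← hgx', h]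
  obtain ⟨c, ⟨hcx, hcx'⟩, -⟩ := h2.td.pairGen x x' hgne
  refine ⟨g c, ?_, ?_⟩
  · have h := (hadj x c).mp hcx; rwa [hfx] at h
  · have h := (hadj x' c).mp hcx'; rwa [hfx'] at h

omit h2 in
/-- peel two edges off a block-to-block walk in a bipartite graph -/
lemma bip_peel : ∀ {u v : ν0 ⊕ β0} (W : (bipGraph adj0).Walk u v) (Q Q' : β0),
    u = Sum.inr Q → v = Sum.inr Q' → W.length ≠ 0 →
    ∃ (p : ν0) (Q1 : β0) (W₂ : (bipGraph adj0).Walk (Sum.inr Q1) (Sum.inr Q')),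
      adj0 p Q ∧ adj0 p Q1 ∧ W₂.length + 2 = W.length := by
  intro u v W Q Q' hu hv hlen
  cases W with
  | nil => simp at hlen
  | cons h W₁ =>
    subst hu
    obtain ⟨p, rfl, hpQ⟩ := bip_adj_inr h
    cases W₁ with
    | nil => exact absurd hv (by simp)
    | cons h' W₂ =>
      obtain ⟨Q1, rfl, hpQ1⟩ := bip_adj_inl h'
      subst hv
      exact ⟨p, Q1, W₂, hpQ, hpQ1, by simp⟩

/-- length-4 walk between blocks of H when a single node of H0 is adjacent to both
underlying blocks of H0 -/
lemma TS.walk4 (Q Q' : β0) (p : ν0) (hp : adj0 p Q) (hp' : adj0 p Q')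
    (b b' : βT) :
    ∃ W : (bipGraph adjH).Walk (Sum.inr (Q, b)) (Sum.inr (Q', b')), W.length ≤ 4 := by
  obtain ⟨q, j, hqp, hqQ, hqb⟩ := TS.node_on_block_ne h2 Q b p
  obtain ⟨j', hj'⟩ := TS.node_on_block h2 Q' b' p hp'
  obtain ⟨c, hc1, hc2⟩ := TS.gen_block h2 Q q p j j' hqQ hp hqp
  exact ⟨.cons (bip_adj_inl_inr.mpr hqb).symm (.cons (bip_adj_inl_inr.mpr hc1)
    (.cons (bip_adj_inl_inr.mpr hc2).symm (.cons (bip_adj_inl_inr.mpr hj') .nil))),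
    by simp⟩

/-- the key lifting lemma -/
lemma TS.lift : ∀ (n : ℕ) (Q Q' : β0) (W : (bipGraph adj0).Walk (Sum.inr Q) (Sum.inr Q')),
    W.length = n → ∀ b b' : βT,
    ∃ W' : (bipGraph adjH).Walk (Sum.inr (Q, b)) (Sum.inr (Q', b')),
      W'.length ≤ max n 4 := by
  intro n
  induction n using Nat.strong_induction_on with
  | _ n IH =>
    intro Q Q' W hW b b'
    by_cases h0 : W.length = 0
    · -- Q = Q'
      have hQ : Q = Q' := by
        have := SimpleGraph.Walk.eq_of_length_eq_zero h0
        exact Sum.inr_injective this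
      subst hQ
      obtain ⟨p, hp⟩ := TS.exists_adj0 h2 Q
      obtain ⟨W', hW'⟩ := TS.walk4 h2 Q Q p hp hp b b'
      exact ⟨W', le_trans hW' (le_max_right _ _)⟩
    obtain ⟨p1, Q1, W₂, hp1Q, hp1Q1, hlen2⟩ := bip_peel W Q Q' rfl rfl h0
    by_cases h1 : W₂.length = 0
    · -- one block step: Q1 = Q'
      have hQ : Q1 = Q' := Sum.inr_injective (SimpleGraph.Walk.eq_of_length_eq_zero h1)
      subst hQ
      obtain ⟨W', hW'⟩ := TS.walk4 h2 Q Q1 p1 hp1Q hp1Q1 b b'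
      exact ⟨W', le_trans hW' (le_max_right _ _)⟩
    obtain ⟨p2, Q2, W₄, hp2Q1, hp2Q2, hlen4⟩ := bip_peel W₂ Q1 Q' rfl rfl h1
    by_cases h4 : W₄.length = 0
    · -- two block steps: Q2 = Q'
      have hQ : Q2 = Q' := Sum.inr_injective (SimpleGraph.Walk.eq_of_length_eq_zero h4)
      subst hQ
      by_cases hpp : p1 = p2
      · subst hpp
        obtain ⟨W', hW'⟩ := TS.walk4 h2 Q Q2 p1 hp1Q hp2Q2 b b'
        exact ⟨W', le_trans hW' (le_max_right _ _)⟩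
      · obtain ⟨j1, hj1⟩ := TS.node_on_block h2 Q b p1 hp1Q
        obtain ⟨j2, hj2⟩ := TS.node_on_block h2 Q2 b' p2 hp2Q2
        obtain ⟨c, hc1, hc2⟩ := TS.gen_block h2 Q1 p1 p2 j1 j2 hp1Q1 hp2Q1 hpp
        exact ⟨.cons (bip_adj_inl_inr.mpr hj1).symm (.cons (bip_adj_inl_inr.mpr hc1)
          (.cons (bip_adj_inl_inr.mpr hc2).symm (.cons (bip_adj_inl_inr.mpr hj2) .nil))),
          by simp⟩
    · -- at least three block steps: n ≥ 6
      obtain ⟨p3, Q3, W₆, -, -, hlen6⟩ := bip_peel W₄ Q2 Q' rfl rfl h4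
      have hn : 6 ≤ n := by omega
      obtain ⟨j1, hj1⟩ := TS.node_on_block h2 Q b p1 hp1Q
      obtain ⟨c, hc⟩ := TS.block_thru_node h2 Q1 p1 j1 hp1Q1
      obtain ⟨W', hW'⟩ := IH W₂.length (by omega) Q1 Q' W₂ rfl c b'
      refine ⟨.cons (bip_adj_inl_inr.mpr hj1).symm (.cons (bip_adj_inl_inr.mpr hc) W'), ?_⟩
      simp only [SimpleGraph.Walk.length_cons]
      have : max W₂.length 4 = W₂.length := by omega
      omega


/-- project a walk of H down to a walk of H0 of the same length -/
lemma TS.proj (Q Q' : β0) (b b' : βT)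
    (W' : (bipGraph adjH).Walk (Sum.inr (Q, b)) (Sum.inr (Q', b'))) :
    ∃ W : (bipGraph adj0).Walk (Sum.inr Q) (Sum.inr Q'), W.length = W'.length := by
  let φ : bipGraph adjH →g bipGraph adj0 := {
    toFun := Sum.map Prod.fst Prod.fst
    map_rel' := by
      intro a c h
      rw [bipGraph, SimpleGraph.fromRel_adj] at h
      obtain ⟨hne, h | h⟩ := h <;> obtain ⟨x, B, rfl, rfl, hxB⟩ := h
      · exact bip_adj_inl_inr.mpr
          (h2.supp x B.1 B.2 (by rw [Prod.mk.eta]; exact hxB))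
      · exact (bip_adj_inl_inr.mpr
          (h2.supp x B.1 B.2 (by rw [Prod.mk.eta]; exact hxB))).symm }
  exact ⟨W'.map φ, SimpleGraph.Walk.length_map φ W'⟩

end

theorem twoStep_lineDiameter' {ν0 β0 νT βT : Type} (d Δ k lam : ℕ)
    (adj0 : ν0 → β0 → Prop) (groupT : νT → Fin Δ) (adjT : νT → βT → Prop)
    (adjH : ν0 × Fin k → β0 × βT → Prop)
    (hconn : (bipGraph adj0).Connected)
    (h2 : TwoStep Δ k adj0 groupT adjT adjH)
    (hlam : 4 ≤ lam)
    (hld : (∀ b b' : β0, b ≠ b' → (bipGraph adj0).dist (Sum.inr b) (Sum.inr b') ≤ lam) ∧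
      (∃ b b' : β0, b ≠ b' ∧ (bipGraph adj0).dist (Sum.inr b) (Sum.inr b') = lam)) :
    (∀ b b' : β0 × βT, b ≠ b' → (bipGraph adjH).dist (Sum.inr b) (Sum.inr b') ≤ lam) ∧
      (∃ b b' : β0 × βT, b ≠ b' ∧ (bipGraph adjH).dist (Sum.inr b) (Sum.inr b') = lam) := by
  constructor
  · rintro ⟨Q, b⟩ ⟨Q', b'⟩ -
    obtain ⟨W, hWlen⟩ :=
      (hconn (Sum.inr Q) (Sum.inr Q')).exists_walk_length_eq_dist
    have hdist0 : (bipGraph adj0).dist (Sum.inr Q) (Sum.inr Q') ≤ lam := by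
      by_cases h : Q = Q'
      · subst h; rw [SimpleGraph.dist_self]; omega
      · exact hld.1 _ _ h
    obtain ⟨W', hW'⟩ := TS.lift h2 W.length Q Q' W rfl b b'
    calc (bipGraph adjH).dist (Sum.inr (Q, b)) (Sum.inr (Q', b'))
        ≤ W'.length := SimpleGraph.dist_le W'
      _ ≤ max W.length 4 := hW'
      _ ≤ lam := by omega
  · obtain ⟨Q, Q', hQQ', hdist⟩ := hld.2
    have hk := h2.td.two_le_k
    have hcard := h2.td.blockCard
    have : Nonempty βT := by
      refine (Nat.card_ne_zero.mp ?_).1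
      rw [hcard]; positivity
    obtain ⟨b⟩ := this
    refine ⟨(Q, b), (Q', b), by simp [hQQ'], ?_⟩
    obtain ⟨W, hWlen⟩ :=
      (hconn (Sum.inr Q) (Sum.inr Q')).exists_walk_length_eq_dist
    obtain ⟨W', hW'⟩ := TS.lift h2 W.length Q Q' W rfl b b
    have hub : (bipGraph adjH).dist (Sum.inr (Q, b)) (Sum.inr (Q', b)) ≤ lam := by
      calc (bipGraph adjH).dist (Sum.inr (Q, b)) (Sum.inr (Q', b))
          ≤ W'.length := SimpleGraph.dist_le W'
        _ ≤ max W.length 4 := hW'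
        _ ≤ lam := by omega
    have hreach : (bipGraph adjH).Reachable (Sum.inr (Q, b)) (Sum.inr (Q', b)) := ⟨W'⟩
    obtain ⟨WH, hWH⟩ := hreach.exists_walk_length_eq_dist
    obtain ⟨W0, hW0⟩ := TS.proj h2 Q Q' b b WH
    have hlb : lam ≤ (bipGraph adjH).dist (Sum.inr (Q, b)) (Sum.inr (Q', b)) := by
      calc lam = (bipGraph adj0).dist (Sum.inr Q) (Sum.inr Q') := hdist.symm
        _ ≤ W0.length := SimpleGraph.dist_le W0
        _ = WH.length := hW0
        _ = _ := hWH
    omega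

/-- If the `(dk,Δ)`-bipartite graph `H` (given by `adjH`) has been
constructed by the 2-step method from the connected `(d,Δ)`-bipartite graph `H0`
(given by `adj0`) and the `[Δ,k]`-transversal design `T`, and `H0` has line-diameter
`lam ≥ 4`, then `H` has line-diameter `lam`. -/
theorem twoStep_lineDiameter {ν0 β0 νT βT : Type} (d Δ k lam : ℕ)
    (adj0 : ν0 → β0 → Prop) (groupT : νT → Fin Δ) (adjT : νT → βT → Prop)
    (adjH : ν0 × Fin k → β0 × βT → Prop)
    (hH0 : IsBipartiteDegRank d Δ adj0)
    (hconn : (bipGraph adj0).Connected)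
    (h2 : TwoStep Δ k adj0 groupT adjT adjH)
    (hlam : 4 ≤ lam) (hld : HasLineDiam adj0 lam) :
    HasLineDiam adjH lam := by
  exact twoStep_lineDiameter' d Δ k lam adj0 groupT adjT adjH hconn h2 hlam hld
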